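/- arXiv:1410.5750 — 2 statements merged into one kernel-verified Lean document; each statement's English description precedes it below -/
import Mathlib

section
/- If H is a graph in which every vertex degree is divisible by r, then there is an r-regular graph H_0 such that H can be obtained from H_0 by identifying vertices (equivalently, there is an edge-bijective graph homomorphism from H_0 to H). -/
open SimpleGraph

namespace Paper

variable {V W : Type*}

/-- The copy of `F` inside a graph on vertex set `V` given by an injective map `φ`. -/
def copyAt (F : SimpleGraph W) (φ : W ↪ V) : SimpleGraph V where
  Adj x y := ∃ a b, F.Adj a b ∧ φ a = x ∧ φ b = y
  symm := by constructor; rintro x y ⟨a, b, h, rfl, rfl⟩; exact ⟨b, a, h.symm, rfl, rfl⟩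
  loopless := by
    constructor
    rintro x ⟨a, b, h, rfl, hb⟩
    exact F.loopless.irrefl a ((φ.injective hb) ▸ h)

/-- `s` is an `F`-decomposition of `G`: a family of copies of `F` in `G`, pairwise
edge-disjoint, whose edge sets cover every edge of `G`. -/
def IsDecompositionOn (F : SimpleGraph W) (G : SimpleGraph V) (s : Set (W ↪ V)) : Prop :=
  (∀ φ ∈ s, copyAt F φ ≤ G) ∧
  (∀ e ∈ G.edgeSet, ∃ φ ∈ s, e ∈ (copyAt F φ).edgeSet) ∧
  s.Pairwise fun φ ψ => Disjoint (copyAt F φ).edgeSet (copyAt F ψ).edgeSet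

/-- `G` has an `F`-decomposition: its edge set can be partitioned into copies of `F`. -/
def HasDecomposition (F : SimpleGraph W) (G : SimpleGraph V) : Prop :=
  ∃ s : Set (W ↪ V), IsDecompositionOn F G s

/-- The number of edges of a graph. -/
noncomputable def ecard (G : SimpleGraph V) : ℕ := Nat.card G.edgeSet

/-- The degree of a vertex. -/
noncomputable def ndeg (G : SimpleGraph V) (v : V) : ℕ := Nat.card (G.neighborSet v)

section
variable {V : Type} [Fintype V] (H : SimpleGraph V) (r : ℕ)

noncomputable def blk (v : V) : H.neighborSet v ≃ Fin (ndeg H v) := Finite.equivFin _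

noncomputable def split : SimpleGraph (Σ v : V, Fin (ndeg H v / r)) where
  Adj x y := ∃ h : H.Adj x.1 y.1,
    ((blk H x.1 ⟨y.1, h⟩ : Fin _) : ℕ) / r = x.2 ∧ ((blk H y.1 ⟨x.1, h.symm⟩ : Fin _) : ℕ) / r = y.2
  symm := by constructor; rintro ⟨u,i⟩ ⟨v,j⟩ ⟨h, h1, h2⟩; exact ⟨h.symm, h2, h1⟩
  loopless := by constructor; rintro ⟨u,i⟩ ⟨h, _⟩; exact H.loopless.irrefl u h

def blockEquiv (d r i : ℕ) (hr : 0 < r) (hd : r ∣ d) (hi : i < d / r) :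
    {n : Fin d // (n : ℕ) / r = i} ≃ Fin r where
  toFun n := ⟨(n.1 : ℕ) % r, Nat.mod_lt _ hr⟩
  invFun m := ⟨⟨i * r + m.1, by
      calc i * r + m.1 < i * r + r := by omega
        _ = (i+1) * r := by ring
        _ ≤ (d / r) * r := Nat.mul_le_mul_right _ hi
        _ = d := Nat.div_mul_cancel hd⟩,
    by rw [Nat.add_div_of_dvd_right ⟨i, by ring⟩, Nat.div_eq_of_lt m.2,
         Nat.mul_div_cancel _ hr]; omega⟩
  left_inv n := by
    ext
    simp only []
    have := n.2
    have h2 : (n.1 : ℕ) = i * r + (n.1 : ℕ) % r := by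
      conv_lhs => rw [← Nat.div_add_mod (n.1 : ℕ) r]
      rw [this, Nat.mul_comm]
    exact h2.symm
  right_inv m := by
    ext
    show ((i * r + (m:ℕ)) % r : ℕ) = (m:ℕ)
    rw [Nat.mul_comm, Nat.mul_add_mod, Nat.mod_eq_of_lt m.2]

noncomputable def snd2 (hdiv : ∀ v, r ∣ ndeg H v) (v : V) (w : H.neighborSet v) :
    Fin (ndeg H w.1 / r) :=
  ⟨((blk H w.1 ⟨v, H.adj_symm w.2⟩ : Fin _) : ℕ) / r,
    Nat.div_lt_div_of_lt_of_dvd (hdiv _) (Fin.is_lt _)⟩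

noncomputable def gmap (hdiv : ∀ v, r ∣ ndeg H v) (v : V) (i : Fin (ndeg H v / r))
    (n : {n : Fin (ndeg H v) // (n : ℕ) / r = i.1}) : ((split H r).neighborSet ⟨v, i⟩) :=
  ⟨⟨((blk H v).symm n.1).1, snd2 H r hdiv v ((blk H v).symm n.1)⟩,
    ⟨((blk H v).symm n.1).2, by rw [Subtype.eta, Equiv.apply_symm_apply]; exact n.2, rfl⟩⟩

lemma gmap_bijective (hdiv : ∀ v, r ∣ ndeg H v) (v : V) (i : Fin (ndeg H v / r)) :
    Function.Bijective (gmap H r hdiv v i) := by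
  constructor
  · intro n1 n2 h
    have h1 : ((blk H v).symm n1.1).1 = ((blk H v).symm n2.1).1 :=
      congrArg Sigma.fst (congrArg Subtype.val h)
    exact Subtype.ext ((blk H v).symm.injective (Subtype.ext h1))
  · rintro ⟨⟨u, j⟩, h, h1, h2⟩
    refine ⟨⟨blk H v ⟨u, h⟩, h1⟩, ?_⟩
    apply Subtype.ext
    have key : (blk H v).symm (blk H v ⟨u, h⟩) = ⟨u, h⟩ := Equiv.symm_apply_apply _ _
    show (⟨((blk H v).symm (blk H v ⟨u, h⟩)).1,
        snd2 H r hdiv v ((blk H v).symm (blk H v ⟨u, h⟩))⟩ : Σ w, Fin (ndeg H w / r)) = ⟨u, j⟩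
    rw [key]
    exact Sigma.ext rfl (heq_of_eq (Fin.ext h2))

lemma split_ndeg (hr : 0 < r) (hdiv : ∀ v, r ∣ ndeg H v) (v : V) (i : Fin (ndeg H v / r)) :
    ndeg (split H r) ⟨v, i⟩ = r := by
  have e1 := Equiv.ofBijective _ (gmap_bijective H r hdiv v i)
  have e2 := blockEquiv (ndeg H v) r i.1 hr (hdiv v) i.2
  calc ndeg (split H r) ⟨v, i⟩ = Nat.card {n : Fin (ndeg H v) // (n : ℕ) / r = i.1} :=
        Nat.card_congr e1.symm
    _ = Nat.card (Fin r) := Nat.card_congr e2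
    _ = r := Nat.card_eq_fintype_card.trans (Fintype.card_fin r)

def splitHom : split H r →g H where
  toFun := Sigma.fst
  map_rel' := fun h => h.choose

lemma split_adj_unique {x x' y y' : Σ v : V, Fin (ndeg H v / r)}
    (h : (split H r).Adj x y) (h' : (split H r).Adj x' y')
    (e1 : x.1 = x'.1) (e2 : y.1 = y'.1) : x = x' ∧ y = y' := by
  obtain ⟨u, i⟩ := x; obtain ⟨v, j⟩ := y
  obtain ⟨u', i'⟩ := x'; obtain ⟨v', j'⟩ := y'
  dsimp at e1 e2
  subst e1; subst e2
  obtain ⟨ha, h1, h2⟩ := h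
  obtain ⟨ha', h1', h2'⟩ := h'
  have hi : i = i' := Fin.ext (h1.symm.trans h1')
  have hj : j = j' := Fin.ext (h2.symm.trans h2')
  subst hi; subst hj
  exact ⟨rfl, rfl⟩

lemma split_mapEdgeSet_bij (hdiv : ∀ v, r ∣ ndeg H v) : Function.Bijective (splitHom H r).mapEdgeSet := by
  constructor
  · rintro ⟨e1, he1⟩ ⟨e2, he2⟩ h
    simp only [Hom.mapEdgeSet, Subtype.mk.injEq] at h ⊢
    induction e1 using Sym2.ind with | h x y =>
    induction e2 using Sym2.ind with | h x' y' =>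
    rw [mem_edgeSet] at he1 he2
    simp only [Sym2.map_pair_eq, Sym2.eq_iff] at h
    rcases h with ⟨hx, hy⟩ | ⟨hx, hy⟩
    · obtain ⟨hxx, hyy⟩ := split_adj_unique H r he1 he2 hx hy
      rw [hxx, hyy]
    · obtain ⟨hxx, hyy⟩ := split_adj_unique H r he1 he2.symm hx hy
      rw [hxx, hyy, Sym2.eq_swap]
  · rintro ⟨e, he⟩
    induction e using Sym2.ind with | h u v =>
    rw [mem_edgeSet] at he
    refine ⟨⟨s(⟨u, ⟨((blk H u ⟨v, he⟩ : Fin _) : ℕ) / r,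
        Nat.div_lt_div_of_lt_of_dvd (hdiv u) (Fin.is_lt _)⟩⟩,
      ⟨v, ⟨((blk H v ⟨u, he.symm⟩ : Fin _) : ℕ) / r,
        Nat.div_lt_div_of_lt_of_dvd (hdiv v) (Fin.is_lt _)⟩⟩), ?_⟩, ?_⟩
    · rw [mem_edgeSet]
      exact ⟨he, rfl, rfl⟩
    · simp [Hom.mapEdgeSet, splitHom]
end

/-- If every vertex degree of a (finite) graph `H` is divisible by `r`, then there is an
`r`-regular graph `H₀` from which `H` can be obtained by identifying vertices;
equivalently, there is an edge-bijective graph homomorphism `H₀ → H`. -/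

theorem exists_regular_with_edge_bijective_hom {V : Type} [Fintype V]
    (H : SimpleGraph V) (r : ℕ) (hdiv : ∀ v, r ∣ ndeg H v) :
    ∃ (V₀ : Type) (_ : Fintype V₀) (H₀ : SimpleGraph V₀),
      (∀ v, ndeg H₀ v = r) ∧
      ∃ φ : H₀ →g H, Function.Bijective φ.mapEdgeSet := by
  classical
  rcases Nat.eq_zero_or_pos r with rfl | hr
  · refine ⟨Empty, inferInstance, ⊥, fun v => v.elim,
      ⟨⟨Empty.elim, fun {a} _ => a.elim⟩, ?_, ?_⟩⟩
    · rintro ⟨e, he⟩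
      induction e using Sym2.ind with | h x y => exact x.elim
    · rintro ⟨e, he⟩
      exfalso
      induction e using Sym2.ind with | h u v =>
      rw [mem_edgeSet] at he
      have h0 : ndeg H u = 0 := Nat.eq_zero_of_zero_dvd (hdiv u)
      rw [ndeg, Nat.card_eq_zero] at h0
      rcases h0 with h0 | h0
      · exact h0.elim' ⟨v, he⟩
      · exact (Set.toFinite _).not_infinite (Set.infinite_coe_iff.mp h0)
  · refine ⟨Σ v : V, Fin (ndeg H v / r), inferInstance, split H r,
      fun x => ?_, splitHom H r, split_mapEdgeSet_bij H r hdiv⟩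
    obtain ⟨v, i⟩ := x
    exact split_ndeg H r hr hdiv v i


end Paper
end

section
/- Let H be an r-regular graph that is a vertex-disjoint union of cycles (case r = 2). If for every cycle C in H and every edge-bijective homomorphic image C' of C there exists a (C, C')_{C_3}-transformer of degeneracy at most 4 rooted at V(C ∪ C'), then for every graph H' obtained from H by identifying vertices (with H, H' vertex-disjoint) there exists an (H, H')_{C_3}-transformer T whose degeneracy rooted at V(H ∪ H') is at most 4. -/
open SimpleGraph

namespace Paper

variable {V W : Type*}

/-- `T` is an `(H, H')_F`-transformer: `T` is edge-disjoint from `H` and `H'`,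
`V(H ∪ H') ⊆ V(T)`, `T` has no edges inside `V(H ∪ H')`, and both `T ∪ H` and
`T ∪ H'` have `F`-decompositions. -/
def IsTransformer {V W : Type*} (F : SimpleGraph W) (H H' T : SimpleGraph V) : Prop :=
  Disjoint H.edgeSet T.edgeSet ∧ Disjoint H'.edgeSet T.edgeSet ∧
  H.support ∪ H'.support ⊆ T.support ∧
  (∀ x ∈ H.support ∪ H'.support, ∀ y ∈ H.support ∪ H'.support, ¬ T.Adj x y) ∧
  HasDecomposition F (T ⊔ H) ∧ HasDecomposition F (T ⊔ H')

/-- The number of neighbours of `v` in `G` lying inside the set `A`. -/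
noncomputable def ndegIn (G : SimpleGraph V) (v : V) (A : Set V) : ℕ :=
  Nat.card ↥(G.neighborSet v ∩ A)

/-- The degeneracy of `S` rooted at `R` is at most `d`: there is an ordering of the
vertices starting with the vertices of `R` in which every vertex outside `R` has at
most `d` earlier neighbours. -/
def DegeneracyRootedLE (S : SimpleGraph V) (R : Set V) (d : ℕ) : Prop :=
  ∃ ord : V → ℕ,
    Set.InjOn ord (S.support ∪ R) ∧
    (∀ x ∈ R, ∀ y ∈ (S.support ∪ R) \ R, ord x < ord y) ∧
    ∀ y ∈ (S.support ∪ R) \ R,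
      Nat.card ↥{z | z ∈ S.neighborSet y ∧ ord z < ord y} ≤ d

/-- `C` is a cycle graph: its support is nonempty, every vertex of its support has
degree `2`, and any two vertices of its support are connected in `C`. -/
def IsCycleGraph (C : SimpleGraph V) : Prop :=
  C.support.Nonempty ∧ (∀ v ∈ C.support, ndeg C v = 2) ∧
  ∀ v ∈ C.support, ∀ w ∈ C.support, C.Reachable v w


section Helpers

variable {G K T : SimpleGraph V}

lemma support_sup' (G K : SimpleGraph V) : (G ⊔ K).support = G.support ∪ K.support := by
  ext x
  simp only [SimpleGraph.mem_support, Set.mem_union, SimpleGraph.sup_adj]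
  constructor
  · rintro ⟨w, h | h⟩
    · exact Or.inl ⟨w, h⟩
    · exact Or.inr ⟨w, h⟩
  · rintro (⟨w, h⟩ | ⟨w, h⟩)
    · exact ⟨w, Or.inl h⟩
    · exact ⟨w, Or.inr h⟩

lemma disjoint_edgeSet_of_disjoint_support (h : Disjoint G.support K.support) :
    Disjoint G.edgeSet K.edgeSet := by
  rw [Set.disjoint_left]
  intro e heG heK
  induction e using Sym2.ind with
  | _ x y =>
    rw [SimpleGraph.mem_edgeSet] at heG heK
    exact Set.disjoint_left.mp h ⟨_, heG⟩ ⟨_, heK⟩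

lemma disjoint_edgeSet_of_no_edges {R : Set V}
    (hsub : G.support ∩ T.support ⊆ R)
    (hno : ∀ x ∈ R, ∀ y ∈ R, ¬ T.Adj x y) : Disjoint G.edgeSet T.edgeSet := by
  rw [Set.disjoint_left]
  intro e heG heT
  induction e using Sym2.ind with
  | _ x y =>
    rw [SimpleGraph.mem_edgeSet] at heG heT
    exact hno x (hsub ⟨⟨y, heG⟩, ⟨y, heT⟩⟩) y (hsub ⟨⟨x, heG.symm⟩, ⟨x, heT.symm⟩⟩) heT

lemma hasDecomposition_of_edgeSet_eq_empty {F : SimpleGraph W} (h : G.edgeSet = ∅) :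
    HasDecomposition F G :=
  ⟨∅, fun _ h => h.elim, fun e he => by rw [h] at he; exact he.elim, Set.pairwise_empty _⟩

lemma HasDecomposition.sup {F : SimpleGraph W} {G K : SimpleGraph V}
    (h1 : HasDecomposition F G) (h2 : HasDecomposition F K)
    (hd : Disjoint G.edgeSet K.edgeSet) : HasDecomposition F (G ⊔ K) := by
  obtain ⟨s, hs1, hs2, hs3⟩ := h1
  obtain ⟨t, ht1, ht2, ht3⟩ := h2
  refine ⟨s ∪ t, ?_, ?_, ?_⟩
  · rintro φ (hφ | hφ)
    · exact (hs1 φ hφ).trans le_sup_left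
    · exact (ht1 φ hφ).trans le_sup_right
  · intro e he
    rw [SimpleGraph.edgeSet_sup] at he
    rcases he with he | he
    · obtain ⟨φ, hφ, h⟩ := hs2 e he; exact ⟨φ, Or.inl hφ, h⟩
    · obtain ⟨φ, hφ, h⟩ := ht2 e he; exact ⟨φ, Or.inr hφ, h⟩
  · rintro φ (hφ | hφ) ψ (hψ | hψ) hne
    · exact hs3 hφ hψ hne
    · exact hd.mono (SimpleGraph.edgeSet_mono (hs1 φ hφ)) (SimpleGraph.edgeSet_mono (ht1 ψ hψ))
    · exact (hd.mono (SimpleGraph.edgeSet_mono (hs1 ψ hψ)) (SimpleGraph.edgeSet_mono (ht1 φ hφ))).symm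
    · exact ht3 hφ hψ hne

lemma exists_bounded_injOn {S : Set V} (hS : S.Finite) :
    ∃ (f : V → ℕ) (N : ℕ), Set.InjOn f S ∧ ∀ x ∈ S, f x < N := by
  classical
  haveI := hS.fintype
  refine ⟨fun v => if h : v ∈ S then (Fintype.equivFin S ⟨v, h⟩ : ℕ) else 0,
    Fintype.card S, ?_, ?_⟩
  · intro a ha b hb h
    simp only [dif_pos ha, dif_pos hb] at h
    have := (Fintype.equivFin S).injective (Fin.val_injective h)
    exact congrArg Subtype.val this
  · intro x hx
    simp only [dif_pos hx]
    exact (Fintype.equivFin S ⟨x, hx⟩).isLt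


/-- The connected component of `v` in `H`, as a graph. -/
def comp (H : SimpleGraph V) (v : V) : SimpleGraph V where
  Adj x y := H.Adj x y ∧ H.Reachable v x
  symm := ⟨fun x y ⟨h, hr⟩ => ⟨h.symm, hr.trans h.reachable⟩⟩
  loopless := ⟨fun x ⟨h, _⟩ => H.loopless.irrefl x h⟩

/-- Everything outside the component of `v`. -/
def restOf (H : SimpleGraph V) (v : V) : SimpleGraph V where
  Adj x y := H.Adj x y ∧ ¬ H.Reachable v x
  symm := ⟨fun x y ⟨h, hr⟩ => ⟨h.symm, fun hy => hr (hy.trans h.symm.reachable)⟩⟩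
  loopless := ⟨fun x ⟨h, _⟩ => H.loopless.irrefl x h⟩

variable {H : SimpleGraph V} {v : V}

lemma comp_le : comp H v ≤ H := by intro a b h; exact h.1

lemma restOf_le : restOf H v ≤ H := by intro a b h; exact h.1

lemma comp_sup_restOf : comp H v ⊔ restOf H v = H := by
  ext x y
  constructor
  · rintro (h | h) <;> exact h.1
  · intro h
    by_cases hr : H.Reachable v x
    · exact Or.inl ⟨h, hr⟩
    · exact Or.inr ⟨h, hr⟩

lemma mem_comp_support {x : V} :
    x ∈ (comp H v).support ↔ x ∈ H.support ∧ H.Reachable v x := by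
  constructor
  · rintro ⟨w, h, hr⟩; exact ⟨⟨w, h⟩, hr⟩
  · rintro ⟨⟨w, h⟩, hr⟩; exact ⟨w, h, hr⟩

lemma mem_restOf_support {x : V} :
    x ∈ (restOf H v).support ↔ x ∈ H.support ∧ ¬ H.Reachable v x := by
  constructor
  · rintro ⟨w, h, hr⟩; exact ⟨⟨w, h⟩, hr⟩
  · rintro ⟨⟨w, h⟩, hr⟩; exact ⟨w, h, hr⟩

lemma disjoint_comp_restOf_support : Disjoint (comp H v).support (restOf H v).support := by
  rw [Set.disjoint_left]
  intro x hx hx'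
  exact (mem_restOf_support.mp hx').2 (mem_comp_support.mp hx).2

lemma comp_neighborSet {x : V} (hr : H.Reachable v x) :
    (comp H v).neighborSet x = H.neighborSet x := by
  ext y
  exact ⟨fun h => h.1, fun h => ⟨h, hr⟩⟩

lemma restOf_neighborSet {x : V} (hr : ¬ H.Reachable v x) :
    (restOf H v).neighborSet x = H.neighborSet x := by
  ext y
  exact ⟨fun h => h.1, fun h => ⟨h, hr⟩⟩

lemma comp_reachable {x w : V} (p : H.Walk x w) (hr : H.Reachable v x) :
    (comp H v).Reachable x w := by
  induction p with
  | nil => exact SimpleGraph.Reachable.refl _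
  | @cons a b c h _ ih =>
      exact (SimpleGraph.Adj.reachable (⟨h, hr⟩ : (comp H v).Adj a b)).trans
        (ih (hr.trans h.reachable))

lemma isCycleGraph_comp (hreg : ∀ x ∈ H.support, ndeg H x = 2) (hv : v ∈ H.support) :
    IsCycleGraph (comp H v) := by
  refine ⟨?_, ?_, ?_⟩
  · obtain ⟨w, h⟩ := hv
    exact ⟨v, w, h, SimpleGraph.Reachable.refl _⟩
  · intro x hx
    obtain ⟨hxs, hr⟩ := mem_comp_support.mp hx
    rw [ndeg, comp_neighborSet hr]
    exact hreg x hxs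
  · intro x hx w hw
    obtain ⟨_, hrx⟩ := mem_comp_support.mp hx
    obtain ⟨_, hrw⟩ := mem_comp_support.mp hw
    obtain ⟨p⟩ := hrx.symm.trans hrw
    exact comp_reachable p hrx

/-- The image of a subgraph `K ≤ H` under a homomorphism `φ : H →g H'`. -/
def himg {H H' : SimpleGraph V} (φ : H →g H') (K : SimpleGraph V) (hK : K ≤ H) :
    SimpleGraph V where
  Adj x y := ∃ a b, K.Adj a b ∧ φ a = x ∧ φ b = y
  symm := by constructor; rintro x y ⟨a, b, h, rfl, rfl⟩; exact ⟨b, a, h.symm, rfl, rfl⟩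
  loopless := by
    constructor
    rintro x ⟨a, b, h, rfl, hb⟩
    exact (φ.map_adj (hK h)).ne hb.symm

variable {H' : SimpleGraph V} {φ : H →g H'} {K : SimpleGraph V} {hK : K ≤ H}

lemma himg_support_subset : (himg φ K hK).support ⊆ H'.support := by
  rintro x ⟨y, a, b, h, rfl, rfl⟩
  exact ⟨φ b, φ.map_adj (hK h)⟩

lemma mem_himg_edgeSet {e : Sym2 V} :
    e ∈ (himg φ K hK).edgeSet ↔ ∃ e' ∈ K.edgeSet, Sym2.map φ e' = e := by
  induction e using Sym2.ind with
  | _ x y =>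
    rw [SimpleGraph.mem_edgeSet]
    constructor
    · rintro ⟨a, b, h, rfl, rfl⟩
      exact ⟨s(a, b), K.mem_edgeSet.mpr h, rfl⟩
    · rintro ⟨e', he', hmap⟩
      induction e' using Sym2.ind with
      | _ a b =>
        rw [SimpleGraph.mem_edgeSet] at he'
        rw [Sym2.map_pair_eq, Sym2.eq_iff] at hmap
        rcases hmap with ⟨ha, hb⟩ | ⟨ha, hb⟩
        · exact ⟨a, b, he', ha, hb⟩
        · exact ⟨b, a, he'.symm, hb, ha⟩

/-- The homomorphism `K →g himg φ K hK`. -/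
def himgHom (φ : H →g H') (K : SimpleGraph V) (hK : K ≤ H) : K →g himg φ K hK where
  toFun := φ
  map_rel' := fun h => ⟨_, _, h, rfl, rfl⟩


lemma injective_sym2_map (hφ : Function.Injective φ.mapEdgeSet) {e1 e2 : Sym2 V}
    (h1 : e1 ∈ H.edgeSet) (h2 : e2 ∈ H.edgeSet) (h : Sym2.map φ e1 = Sym2.map φ e2) :
    e1 = e2 := by
  have := hφ (a₁ := ⟨e1, h1⟩) (a₂ := ⟨e2, h2⟩) (Subtype.ext h)
  exact congrArg Subtype.val this

lemma himgHom_bijective (hφ : Function.Bijective φ.mapEdgeSet) :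
    Function.Bijective (himgHom φ K hK).mapEdgeSet := by
  constructor
  · rintro ⟨e1, h1⟩ ⟨e2, h2⟩ h
    have h' : Sym2.map φ e1 = Sym2.map φ e2 := congrArg Subtype.val h
    exact Subtype.ext (injective_sym2_map hφ.1 (SimpleGraph.edgeSet_mono hK h1)
      (SimpleGraph.edgeSet_mono hK h2) h')
  · rintro ⟨e, he⟩
    obtain ⟨e', he', hmap⟩ := mem_himg_edgeSet.mp he
    exact ⟨⟨e', he'⟩, Subtype.ext hmap⟩

lemma himg_sup_eq (hφs : Function.Surjective φ.mapEdgeSet) {K1 K2 : SimpleGraph V}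
    (h1 : K1 ≤ H) (h2 : K2 ≤ H) (hsup : K1 ⊔ K2 = H) :
    himg φ K1 h1 ⊔ himg φ K2 h2 = H' := by
  ext x y
  rw [SimpleGraph.sup_adj]
  constructor
  · rintro (⟨a, b, h, rfl, rfl⟩ | ⟨a, b, h, rfl, rfl⟩)
    · exact φ.map_adj (h1 h)
    · exact φ.map_adj (h2 h)
  · intro h
    obtain ⟨⟨e, he⟩, hmap⟩ := hφs ⟨s(x, y), H'.mem_edgeSet.mpr h⟩
    have hmap' : Sym2.map φ e = s(x, y) := congrArg Subtype.val hmap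
    induction e using Sym2.ind with
    | _ a b =>
      rw [Sym2.map_pair_eq, Sym2.eq_iff] at hmap'
      rw [SimpleGraph.mem_edgeSet] at he
      have he' : (K1 ⊔ K2).Adj a b := by rw [hsup]; exact he
      rcases hmap' with ⟨ha, hb⟩ | ⟨ha, hb⟩
      · rcases he' with h' | h'
        · exact Or.inl ⟨a, b, h', ha, hb⟩
        · exact Or.inr ⟨a, b, h', ha, hb⟩
      · rcases he' with ⟨h'⟩ | h'
        · exact Or.inl ⟨b, a, h'.symm, hb, ha⟩
        · exact Or.inr ⟨b, a, h'.symm, hb, ha⟩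

lemma support_finite_of_hom (hφs : Function.Surjective φ.mapEdgeSet)
    (hfin : H.support.Finite) : H'.support.Finite := by
  apply Set.Finite.subset (hfin.image φ)
  rintro x ⟨y, h⟩
  obtain ⟨⟨e, he⟩, hmap⟩ := hφs ⟨s(x, y), H'.mem_edgeSet.mpr h⟩
  have hmap' : Sym2.map φ e = s(x, y) := congrArg Subtype.val hmap
  induction e using Sym2.ind with
  | _ a b =>
    rw [Sym2.map_pair_eq, Sym2.eq_iff] at hmap'
    rw [SimpleGraph.mem_edgeSet] at he
    rcases hmap' with ⟨ha, hb⟩ | ⟨ha, hb⟩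
    · exact ⟨a, ⟨b, he⟩, ha⟩
    · exact ⟨b, ⟨a, he.symm⟩, hb⟩

lemma disjoint_himg_edgeSet (hφi : Function.Injective φ.mapEdgeSet) {K1 K2 : SimpleGraph V}
    (h1 : K1 ≤ H) (h2 : K2 ≤ H) (hd : Disjoint K1.edgeSet K2.edgeSet) :
    Disjoint (himg φ K1 h1).edgeSet (himg φ K2 h2).edgeSet := by
  rw [Set.disjoint_left]
  intro e he1 he2
  obtain ⟨e1, he1', hm1⟩ := mem_himg_edgeSet.mp he1
  obtain ⟨e2, he2', hm2⟩ := mem_himg_edgeSet.mp he2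
  have : e1 = e2 := injective_sym2_map hφi (SimpleGraph.edgeSet_mono h1 he1')
    (SimpleGraph.edgeSet_mono h2 he2') (hm1.trans hm2.symm)
  exact Set.disjoint_left.mp hd he1' (this ▸ he2')


lemma nat_card_le_of_subset {s t : Set V} (h : s ⊆ t) (ht : t.Finite) :
    Nat.card s ≤ Nat.card t := by
  rw [Nat.card_coe_set_eq, Nat.card_coe_set_eq]
  exact Set.ncard_le_ncard h ht

lemma neighborSet_subset_support (G : SimpleGraph V) (y : V) :
    G.neighborSet y ⊆ G.support := fun z hz => ⟨y, hz.symm⟩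

lemma combine {F : SimpleGraph W} {C K C' K' T1 T2 : SimpleGraph V}
    (h1 : IsTransformer F C C' T1) (h2 : IsTransformer F K K' T2)
    (d1 : DegeneracyRootedLE T1 (C.support ∪ C'.support) 4)
    (d2 : DegeneracyRootedLE T2 (K.support ∪ K'.support) 4)
    (hT1fin : T1.support.Finite) (hT2fin : T2.support.Finite)
    (hRfin : ((C.support ∪ C'.support) ∪ (K.support ∪ K'.support)).Finite)
    (hsep1 : Disjoint (T1.support \ (C.support ∪ C'.support))
      (T2.support ∪ (K.support ∪ K'.support)))
    (hsep2 : Disjoint (T2.support \ (K.support ∪ K'.support)) (C.support ∪ C'.support))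
    (hCK : Disjoint C.support K.support)
    (hCK' : Disjoint C.support K'.support)
    (hC'K : Disjoint C'.support K.support)
    (hE' : Disjoint C'.edgeSet K'.edgeSet) :
    IsTransformer F (C ⊔ K) (C' ⊔ K') (T1 ⊔ T2) ∧
      DegeneracyRootedLE (T1 ⊔ T2) ((C.support ∪ C'.support) ∪ (K.support ∪ K'.support)) 4 := by
  classical
  obtain ⟨h1a, h1b, h1c, h1d, h1e, h1f⟩ := h1
  obtain ⟨h2a, h2b, h2c, h2d, h2e, h2f⟩ := h2
  set R1 := C.support ∪ C'.support with hR1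
  set R2 := K.support ∪ K'.support with hR2
  set R := R1 ∪ R2 with hRdef
  -- basic membership facts
  have fact1 : ∀ x ∈ T1.support, x ∈ R → x ∈ R1 := by
    intro x hx hxR
    by_contra hx1
    have : x ∈ T1.support \ R1 := ⟨hx, hx1⟩
    have hnot := Set.disjoint_left.mp hsep1 this
    rcases hxR with h | h
    · exact hx1 h
    · exact hnot (Or.inr h)
  have fact2 : ∀ x ∈ T2.support, x ∈ R → x ∈ R2 := by
    intro x hx hxR
    by_contra hx2
    have : x ∈ T2.support \ R2 := ⟨hx, hx2⟩
    have hnot := Set.disjoint_left.mp hsep2 this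
    rcases hxR with h | h
    · exact hnot h
    · exact hx2 h
  have factS : ∀ x ∈ T1.support, x ∈ T2.support → x ∈ R1 := by
    intro x hx hx2
    by_contra hx1
    exact Set.disjoint_left.mp hsep1 ⟨hx, hx1⟩ (Or.inl hx2)
  -- edge disjointness facts
  have eCT2 : Disjoint C.edgeSet T2.edgeSet := by
    refine disjoint_edgeSet_of_no_edges ?_ h2d
    rintro x ⟨hxC, hxT⟩
    exact fact2 x hxT (Or.inl (Or.inl hxC))
  have eKT1 : Disjoint K.edgeSet T1.edgeSet := by
    refine disjoint_edgeSet_of_no_edges ?_ h1d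
    rintro x ⟨hxK, hxT⟩
    exact fact1 x hxT (Or.inr (Or.inl hxK))
  have eC'T2 : Disjoint C'.edgeSet T2.edgeSet := by
    refine disjoint_edgeSet_of_no_edges ?_ h2d
    rintro x ⟨hxC, hxT⟩
    exact fact2 x hxT (Or.inl (Or.inr hxC))
  have eK'T1 : Disjoint K'.edgeSet T1.edgeSet := by
    refine disjoint_edgeSet_of_no_edges ?_ h1d
    rintro x ⟨hxK, hxT⟩
    exact fact1 x hxT (Or.inr (Or.inr hxK))
  have eT1T2 : Disjoint T1.edgeSet T2.edgeSet := by
    refine disjoint_edgeSet_of_no_edges ?_ h2d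
    rintro x ⟨hxT1, hxT2⟩
    exact fact2 x hxT2 (Or.inl (factS x hxT1 hxT2))
  have eCK : Disjoint C.edgeSet K.edgeSet := disjoint_edgeSet_of_disjoint_support hCK
  refine ⟨⟨?_, ?_, ?_, ?_, ?_, ?_⟩, ?_⟩
  · rw [SimpleGraph.edgeSet_sup, SimpleGraph.edgeSet_sup]
    rw [Set.disjoint_union_left, Set.disjoint_union_right, Set.disjoint_union_right]
    exact ⟨⟨h1a, eCT2⟩, ⟨eKT1.symm.symm, h2a⟩⟩
  · rw [SimpleGraph.edgeSet_sup, SimpleGraph.edgeSet_sup]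
    rw [Set.disjoint_union_left, Set.disjoint_union_right, Set.disjoint_union_right]
    exact ⟨⟨h1b, eC'T2⟩, ⟨eK'T1, h2b⟩⟩
  · rw [support_sup', support_sup', support_sup', Set.union_union_union_comm]
    exact Set.union_subset (h1c.trans Set.subset_union_left)
      (h2c.trans Set.subset_union_right)
  · rw [support_sup', support_sup', Set.union_union_union_comm]
    rintro x hx y hy (h | h)
    · have hx1 : x ∈ R1 := fact1 x ⟨y, h⟩ hx
      have hy1 : y ∈ R1 := fact1 y ⟨x, h.symm⟩ hy
      exact h1d x hx1 y hy1 h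
    · have hx2 : x ∈ R2 := fact2 x ⟨y, h⟩ hx
      have hy2 : y ∈ R2 := fact2 y ⟨x, h.symm⟩ hy
      exact h2d x hx2 y hy2 h
  · rw [sup_sup_sup_comm]
    refine HasDecomposition.sup h1e h2e ?_
    rw [SimpleGraph.edgeSet_sup, SimpleGraph.edgeSet_sup]
    rw [Set.disjoint_union_left, Set.disjoint_union_right, Set.disjoint_union_right]
    exact ⟨⟨eT1T2, eKT1.symm⟩, ⟨eCT2, eCK⟩⟩
  · rw [sup_sup_sup_comm]
    refine HasDecomposition.sup h1f h2f ?_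
    rw [SimpleGraph.edgeSet_sup, SimpleGraph.edgeSet_sup]
    rw [Set.disjoint_union_left, Set.disjoint_union_right, Set.disjoint_union_right]
    exact ⟨⟨eT1T2, eK'T1.symm⟩, ⟨eC'T2, hE'⟩⟩
  · -- degeneracy
    obtain ⟨ord1, inj1, base1, deg1⟩ := d1
    obtain ⟨ord2, inj2, base2, deg2⟩ := d2
    obtain ⟨r, N, hrInj, hrlt⟩ := exists_bounded_injOn hRfin
    set M := hT2fin.toFinset.sup ord2 with hM
    have hMle : ∀ x ∈ T2.support, ord2 x ≤ M := fun x hx =>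
      Finset.le_sup (hT2fin.mem_toFinset.mpr hx)
    refine ⟨fun v => if v ∈ R then r v else if v ∈ T2.support then N + ord2 v
      else N + M + 1 + ord1 v, ?_, ?_, ?_⟩
    · -- injectivity
      intro a ha b hb hab
      beta_reduce at hab
      by_cases haR : a ∈ R <;> by_cases hbR : b ∈ R
      · rw [if_pos haR, if_pos hbR] at hab
        exact hrInj haR hbR hab
      · exfalso
        rw [if_pos haR, if_neg hbR] at hab
        have : r a < N := hrlt a haR
        by_cases hbT : b ∈ T2.support
        · rw [if_pos hbT] at hab; omega
        · rw [if_neg hbT] at hab; omega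
      · exfalso
        rw [if_neg haR, if_pos hbR] at hab
        have : r b < N := hrlt b hbR
        by_cases haT : a ∈ T2.support
        · rw [if_pos haT] at hab; omega
        · rw [if_neg haT] at hab; omega
      · rw [if_neg haR, if_neg hbR] at hab
        by_cases haT : a ∈ T2.support <;> by_cases hbT : b ∈ T2.support
        · rw [if_pos haT, if_pos hbT] at hab
          exact inj2 (Or.inl haT) (Or.inl hbT) (by omega)
        · exfalso
          rw [if_pos haT, if_neg hbT] at hab
          have := hMle a haT; omega
        · exfalso
          rw [if_neg haT, if_pos hbT] at hab
          have := hMle b hbT; omega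
        · rw [if_neg haT, if_neg hbT] at hab
          have haT1 : a ∈ T1.support := by
            rcases ha with h | h
            · rw [support_sup'] at h
              rcases h with h | h
              · exact h
              · exact absurd h haT
            · exact absurd h haR
          have hbT1 : b ∈ T1.support := by
            rcases hb with h | h
            · rw [support_sup'] at h
              rcases h with h | h
              · exact h
              · exact absurd h hbT
            · exact absurd h hbR
          exact inj1 (Or.inl haT1) (Or.inl hbT1) (by omega)
    · -- R first
      rintro x hx y ⟨hy, hyR⟩
      beta_reduce
      rw [if_pos hx, if_neg hyR]
      have : r x < N := hrlt x hx
      by_cases hyT : y ∈ T2.support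
      · rw [if_pos hyT]; omega
      · rw [if_neg hyT]; omega
    · -- degree bound
      rintro y ⟨hy, hyR⟩
      beta_reduce
      have hyS : y ∈ T1.support ∪ T2.support := by
        rcases hy with h | h
        · rw [support_sup'] at h; exact h
        · exact absurd h hyR
      by_cases hyT2 : y ∈ T2.support
      · -- y is a new vertex of T2
        have hyR2 : y ∉ R2 := fun h => hyR (Or.inr h)
        have hyT1 : y ∉ T1.support := fun h => hyR (Or.inl (factS y h hyT2))
        have hsub : {z | z ∈ (T1 ⊔ T2).neighborSet y ∧
            (if z ∈ R then r z else if z ∈ T2.support then N + ord2 z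
              else N + M + 1 + ord1 z) <
            (if y ∈ R then r y else if y ∈ T2.support then N + ord2 y
              else N + M + 1 + ord1 y)} ⊆
            {z | z ∈ T2.neighborSet y ∧ ord2 z < ord2 y} := by
          rintro z ⟨hzadj, hzlt⟩
          have hadj2 : T2.Adj y z := by
            rcases hzadj with h | h
            · exact absurd (⟨z, h⟩ : y ∈ T1.support) hyT1
            · exact h
          refine ⟨hadj2, ?_⟩
          rw [if_neg hyR, if_pos hyT2] at hzlt
          by_cases hzR : z ∈ R
          · have hz2 : z ∈ R2 := fact2 z ⟨y, hadj2.symm⟩ hzR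
            exact base2 z hz2 y ⟨Or.inl hyT2, hyR2⟩
          · rw [if_neg hzR] at hzlt
            have hzT2 : z ∈ T2.support := ⟨y, hadj2.symm⟩
            rw [if_pos hzT2] at hzlt
            omega
        refine le_trans (nat_card_le_of_subset hsub ?_) (deg2 y ⟨Or.inl hyT2, hyR2⟩)
        exact hT2fin.subset ((Set.sep_subset _ _).trans (neighborSet_subset_support T2 y))
      · -- y is a new vertex of T1
        have hyT1 : y ∈ T1.support := by
          rcases hyS with h | h
          · exact h
          · exact absurd h hyT2
        have hyR1 : y ∉ R1 := fun h => hyR (Or.inl h)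
        have hsub : {z | z ∈ (T1 ⊔ T2).neighborSet y ∧
            (if z ∈ R then r z else if z ∈ T2.support then N + ord2 z
              else N + M + 1 + ord1 z) <
            (if y ∈ R then r y else if y ∈ T2.support then N + ord2 y
              else N + M + 1 + ord1 y)} ⊆
            {z | z ∈ T1.neighborSet y ∧ ord1 z < ord1 y} := by
          rintro z ⟨hzadj, hzlt⟩
          have hadj1 : T1.Adj y z := by
            rcases hzadj with h | h
            · exact h
            · exact absurd (⟨z, h⟩ : y ∈ T2.support) hyT2
          refine ⟨hadj1, ?_⟩
          rw [if_neg hyR, if_neg hyT2] at hzlt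
          by_cases hzR : z ∈ R
          · have hz1 : z ∈ R1 := fact1 z ⟨y, hadj1.symm⟩ hzR
            exact base1 z hz1 y ⟨Or.inl hyT1, hyR1⟩
          · rw [if_neg hzR] at hzlt
            have hzT2 : z ∉ T2.support := fun h =>
              hzR (Or.inl (factS z ⟨y, hadj1.symm⟩ h))
            rw [if_neg hzT2] at hzlt
            omega
        refine le_trans (nat_card_le_of_subset hsub ?_) (deg1 y ⟨Or.inl hyT1, hyR1⟩)
        exact hT1fin.subset ((Set.sep_subset _ _).trans (neighborSet_subset_support T1 y))


lemma support_bot : (⊥ : SimpleGraph V).support = ∅ := by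
  ext x
  simp [SimpleGraph.mem_support]

lemma trivial_case {F : SimpleGraph W} {H H' : SimpleGraph V}
    (hsup : H.support = ∅)
    (φ : H →g H') (hφs : Function.Surjective φ.mapEdgeSet) :
    IsTransformer F H H' (⊥ : SimpleGraph V) ∧
    DegeneracyRootedLE (⊥ : SimpleGraph V) (H.support ∪ H'.support) 4 := by
  have hHe : H.edgeSet = ∅ := by
    rw [Set.eq_empty_iff_forall_notMem]
    intro e he
    induction e using Sym2.ind with
    | _ x y =>
      rw [SimpleGraph.mem_edgeSet] at he
      have hx : x ∈ H.support := ⟨y, he⟩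
      rw [hsup] at hx
      exact hx
  have hH'e : H'.edgeSet = ∅ := by
    rw [Set.eq_empty_iff_forall_notMem]
    intro e he
    obtain ⟨⟨e0, he0⟩, _⟩ := hφs ⟨e, he⟩
    rw [hHe] at he0
    exact he0
  have hH's : H'.support = ∅ := by
    rw [Set.eq_empty_iff_forall_notMem]
    rintro x ⟨y, h⟩
    have : s(x, y) ∈ H'.edgeSet := H'.mem_edgeSet.mpr h
    rw [hH'e] at this
    exact this
  have hbotsup : (⊥ : SimpleGraph V).support ∪ (H.support ∪ H'.support) = ∅ := by
    rw [support_bot, hsup, hH's]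
    simp
  constructor
  · refine ⟨?_, ?_, ?_, ?_, ?_, ?_⟩
    · rw [SimpleGraph.edgeSet_bot]; exact Set.disjoint_empty _
    · rw [SimpleGraph.edgeSet_bot]; exact Set.disjoint_empty _
    · rw [hsup, hH's]; simp
    · intro x _ y _ h; simp at h
    · refine hasDecomposition_of_edgeSet_eq_empty ?_
      rw [bot_sup_eq]; exact hHe
    · refine hasDecomposition_of_edgeSet_eq_empty ?_
      rw [bot_sup_eq]; exact hH'e
  · refine ⟨fun _ => 0, ?_, ?_, ?_⟩
    · rw [hbotsup]; exact Set.injOn_empty _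
    · intro x hx
      rw [hsup, hH's] at hx
      simp at hx
    · rintro y ⟨hy, hyR⟩
      rw [hbotsup] at hy
      exact hy.elim

lemma aux_main {V : Type*} (n : ℕ) :
    ∀ (H H' : SimpleGraph V),
      (∀ v ∈ H.support, ndeg H v = 2) → H.support.Finite → H.support.ncard ≤ n →
      (∀ C C' : SimpleGraph V, C ≤ H → IsCycleGraph C →
        Disjoint C.support C'.support →
        (∃ ψ : C →g C', Function.Bijective ψ.mapEdgeSet) →
        ∀ A : Set V, A.Finite →
          ∃ T : SimpleGraph V,
            IsTransformer (cycleGraph 3) C C' T ∧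
            DegeneracyRootedLE T (C.support ∪ C'.support) 4 ∧
            T.support.Finite ∧
            Disjoint (T.support \ (C.support ∪ C'.support)) A) →
      Disjoint H.support H'.support →
      ∀ (φ : H →g H'), Function.Bijective φ.mapEdgeSet →
      ∀ A : Set V, A.Finite →
        ∃ T : SimpleGraph V,
          IsTransformer (cycleGraph 3) H H' T ∧
          DegeneracyRootedLE T (H.support ∪ H'.support) 4 ∧
          T.support.Finite ∧
          Disjoint (T.support \ (H.support ∪ H'.support)) A := by
  induction n with
  | zero =>
      intro H H' hreg hfin hcard hcyc hdisj φ hφ A hA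
      have hsup : H.support = ∅ := (Set.ncard_eq_zero hfin).mp (Nat.le_zero.mp hcard)
      obtain ⟨ht, hd⟩ := trivial_case (F := cycleGraph 3) hsup φ hφ.2
      refine ⟨⊥, ht, hd, ?_, ?_⟩
      · rw [support_bot]; exact Set.finite_empty
      · rw [support_bot]; simp
  | succ n ih =>
      intro H H' hreg hfin hcard hcyc hdisj φ hφ A hA
      by_cases hemp : H.support = ∅
      · obtain ⟨ht, hd⟩ := trivial_case (F := cycleGraph 3) hemp φ hφ.2
        refine ⟨⊥, ht, hd, ?_, ?_⟩
        · rw [support_bot]; exact Set.finite_empty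
        · rw [support_bot]; simp
      · obtain ⟨v, hv⟩ := Set.nonempty_iff_ne_empty.mpr hemp
        have hCle : comp H v ≤ H := comp_le
        have hKle : restOf H v ≤ H := restOf_le
        set C : SimpleGraph V := comp H v with hCdef
        set K : SimpleGraph V := restOf H v with hKdef
        have hsupH : C ⊔ K = H := comp_sup_restOf
        have hCsub : C.support ⊆ H.support := fun x hx => (mem_comp_support.mp hx).1
        have hKsub : K.support ⊆ H.support := fun x hx => (mem_restOf_support.mp hx).1
        -- properties of K
        have hKreg : ∀ x ∈ K.support, ndeg K x = 2 := by
          intro x hx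
          obtain ⟨hxH, hr⟩ := mem_restOf_support.mp hx
          rw [ndeg, restOf_neighborSet hr]
          exact hreg x hxH
        have hKfin : K.support.Finite := hfin.subset hKsub
        have hKcard : K.support.ncard ≤ n := by
          have h1 : K.support ⊆ H.support \ {v} := by
            intro x hx
            refine ⟨hKsub hx, ?_⟩
            intro hxv
            rw [Set.mem_singleton_iff] at hxv
            obtain ⟨_, hr⟩ := mem_restOf_support.mp hx
            rw [hxv] at hr
            exact hr (SimpleGraph.Reachable.refl v)
          have h2 : K.support.ncard ≤ (H.support \ {v}).ncard :=
            Set.ncard_le_ncard h1 (hfin.diff)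
          have h3 : (H.support \ {v}).ncard = H.support.ncard - 1 :=
            Set.ncard_diff_singleton_of_mem hv
          omega
        -- images
        set C' : SimpleGraph V := himg φ C hCle with hC'def
        set K' : SimpleGraph V := himg φ K hKle with hK'def
        have hC'sub : C'.support ⊆ H'.support := himg_support_subset
        have hK'sub : K'.support ⊆ H'.support := himg_support_subset
        have hsupH' : C' ⊔ K' = H' := himg_sup_eq hφ.2 hCle hKle hsupH
        have hH'fin : H'.support.Finite := support_finite_of_hom hφ.2 hfin
        -- recursive call on K
        have hKcyc : ∀ CC CC' : SimpleGraph V, CC ≤ K → IsCycleGraph CC →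
            Disjoint CC.support CC'.support →
            (∃ ψ : CC →g CC', Function.Bijective ψ.mapEdgeSet) →
            ∀ A : Set V, A.Finite →
              ∃ T : SimpleGraph V,
                IsTransformer (cycleGraph 3) CC CC' T ∧
                DegeneracyRootedLE T (CC.support ∪ CC'.support) 4 ∧
                T.support.Finite ∧
                Disjoint (T.support \ (CC.support ∪ CC'.support)) A :=
          fun CC CC' h => hcyc CC CC' (h.trans hKle)
        have hKdisj : Disjoint K.support K'.support := hdisj.mono hKsub hK'sub
        obtain ⟨T2, t2, d2, t2fin, t2avoid⟩ := ih K K' hKreg hKfin hKcard hKcyc hKdisj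
          (himgHom φ K hKle) (himgHom_bijective hφ)
          (H.support ∪ H'.support ∪ A) (((hfin.union hH'fin).union hA))
        -- the cycle C
        have hCcyc : IsCycleGraph C := isCycleGraph_comp hreg hv
        have hCdisj : Disjoint C.support C'.support := hdisj.mono hCsub hC'sub
        obtain ⟨T1, t1, d1, t1fin, t1avoid⟩ := hcyc C C' hCle hCcyc hCdisj
          ⟨himgHom φ C hCle, himgHom_bijective hφ⟩
          (T2.support ∪ (H.support ∪ H'.support ∪ A))
          (t2fin.union (((hfin.union hH'fin).union hA)))
        -- combine
        have hCK : Disjoint C.support K.support := disjoint_comp_restOf_support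
        have hCK' : Disjoint C.support K'.support := hdisj.mono hCsub hK'sub
        have hC'K : Disjoint C'.support K.support := (hdisj.mono hKsub hC'sub).symm
        have hE' : Disjoint C'.edgeSet K'.edgeSet :=
          disjoint_himg_edgeSet hφ.1 hCle hKle (disjoint_edgeSet_of_disjoint_support hCK)
        have hRfin : ((C.support ∪ C'.support) ∪ (K.support ∪ K'.support)).Finite := by
          refine (hfin.union hH'fin).subset ?_
          refine Set.union_subset (Set.union_subset ?_ ?_) (Set.union_subset ?_ ?_)
          · exact hCsub.trans Set.subset_union_left
          · exact hC'sub.trans Set.subset_union_right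
          · exact hKsub.trans Set.subset_union_left
          · exact hK'sub.trans Set.subset_union_right
        have hsep1 : Disjoint (T1.support \ (C.support ∪ C'.support))
            (T2.support ∪ (K.support ∪ K'.support)) := by
          refine t1avoid.mono_right ?_
          refine Set.union_subset Set.subset_union_left ?_
          refine Set.union_subset ?_ ?_
          · exact (hKsub.trans Set.subset_union_left).trans
              (Set.subset_union_left.trans Set.subset_union_right)
          · exact (hK'sub.trans Set.subset_union_right).trans
              (Set.subset_union_left.trans Set.subset_union_right)
        have hsep2 : Disjoint (T2.support \ (K.support ∪ K'.support))
            (C.support ∪ C'.support) := by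
          refine t2avoid.mono_right ?_
          refine Set.union_subset ?_ ?_
          · exact (hCsub.trans Set.subset_union_left).trans Set.subset_union_left
          · exact (hC'sub.trans Set.subset_union_right).trans Set.subset_union_left
        obtain ⟨ht, hdcomb⟩ := combine t1 t2 d1 d2 t1fin t2fin hRfin hsep1 hsep2
          hCK hCK' hC'K hE'
        have hRs : H.support ∪ H'.support =
            (C.support ∪ C'.support) ∪ (K.support ∪ K'.support) := by
          rw [← hsupH, ← hsupH', support_sup', support_sup', Set.union_union_union_comm]
        refine ⟨T1 ⊔ T2, ?_, ?_, ?_, ?_⟩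
        · rw [← hsupH, ← hsupH']
          exact ht
        · rw [hRs]
          exact hdcomb
        · rw [support_sup']
          exact t1fin.union t2fin
        · rw [Set.disjoint_left]
          rintro x ⟨hxs, hxR⟩ hxA
          rw [support_sup'] at hxs
          rw [hRs] at hxR
          rcases hxs with h | h
          · exact Set.disjoint_left.mp t1avoid
              ⟨h, fun h1 => hxR (Or.inl h1)⟩ (Or.inr (Or.inr hxA))
          · exact Set.disjoint_left.mp t2avoid
              ⟨h, fun h2 => hxR (Or.inr h2)⟩ (Or.inr hxA)

end Helpers

/-- Let `H` be a `2`-regular graph (a vertex-disjoint union of cycles). Suppose that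
for every cycle `C` of `H` and every edge-bijective homomorphic image `C'` of `C`
(vertex-disjoint from `C`) there is a finite `(C, C')_{C₃}`-transformer of degeneracy
at most `4` rooted at `V(C ∪ C')`, which can moreover be chosen to avoid any
prescribed finite set of vertices. Then for every graph `H'` obtained from `H` by
identifying vertices (i.e. with an edge-bijective homomorphism `H → H'`) and
vertex-disjoint from `H`, there is an `(H, H')_{C₃}`-transformer whose degeneracy
rooted at `V(H ∪ H')` is at most `4`. -/
theorem exists_transformer_of_cycle_transformers {V : Type*}
    (H H' : SimpleGraph V)
    (hreg : ∀ v ∈ H.support, ndeg H v = 2)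
    (hfin : H.support.Finite)
    (hcyc : ∀ C C' : SimpleGraph V, C ≤ H → IsCycleGraph C →
      Disjoint C.support C'.support →
      (∃ ψ : C →g C', Function.Bijective ψ.mapEdgeSet) →
      ∀ A : Set V, A.Finite →
        ∃ T : SimpleGraph V,
          IsTransformer (cycleGraph 3) C C' T ∧
          DegeneracyRootedLE T (C.support ∪ C'.support) 4 ∧
          T.support.Finite ∧
          Disjoint (T.support \ (C.support ∪ C'.support)) A)
    (hdisj : Disjoint H.support H'.support)
    (φ : H →g H') (hφ : Function.Bijective φ.mapEdgeSet) :
    ∃ T : SimpleGraph V,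
      IsTransformer (cycleGraph 3) H H' T ∧
      DegeneracyRootedLE T (H.support ∪ H'.support) 4 := by
  obtain ⟨T, ht, hd, -, -⟩ := aux_main H.support.ncard H H' hreg hfin le_rfl hcyc hdisj
    φ hφ ∅ Set.finite_empty
  exact ⟨T, ht, hd⟩

end Paper
end
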